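/- arXiv:1304.2668 — 2 statements merged into one kernel-verified Lean document; each statement's English description precedes it below -/
import Mathlib

section
/- Let G be a finitely generated group in which every maximal subgroup is normal. Then every subset S of G that generates G as a normal subgroup (i.e., the normal closure of S equals G) already generates G as a subgroup. -/
theorem isCoatomic_subgroup_of_fg {G : Type*} [Group G] (hfg : Group.FG G) :
    IsCoatomic (Subgroup G) := by
  apply CompleteLattice.coatomic_of_top_compact
  rw [CompleteLattice.isCompactElement_iff_le_of_directed_sSup_le]
  intro s hne hdir hle
  obtain ⟨T, hT⟩ := hfg.out
  -- every generator is in sSup s, hence in some member; directedness gives one member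
  have hmem : ∀ g : G, g ∈ sSup s := fun g => hle (Subgroup.mem_top g)
  have key : ∀ F : Finset G, ∃ K ∈ s, (F : Set G) ⊆ K := by
    classical
    intro F
    induction F using Finset.induction_on with
    | empty => exact ⟨hne.choose, hne.choose_spec, by simp⟩
    | @insert a t ha ih =>
      obtain ⟨K, hK, hTK⟩ := ih
      obtain ⟨K', hK', haK'⟩ := (Subgroup.mem_sSup_of_directedOn hne hdir).1 (hmem a)
      obtain ⟨L, hL, hKL, hK'L⟩ := hdir K hK K' hK'
      refine ⟨L, hL, ?_⟩
      intro x hx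
      rcases Finset.mem_insert.1 hx with rfl | hx
      · exact hK'L haK'
      · exact hKL (hTK hx)
  obtain ⟨K, hK, hTK⟩ := key T
  refine ⟨K, hK, ?_⟩
  rw [← hT]
  exact (Subgroup.closure_le K).2 hTK

/-- If `G` is a finitely generated group in which every maximal subgroup is normal,
then every subset whose normal closure is the whole group already generates `G`. -/
theorem stmt_0 {G : Type*} [Group G] (hfg : Group.FG G)
    (hmax : ∀ M : Subgroup G, IsCoatom M → M.Normal)
    (S : Set G) (hS : Subgroup.normalClosure S = ⊤) :
    Subgroup.closure S = ⊤ := by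
  have := isCoatomic_subgroup_of_fg hfg
  by_contra h
  obtain ⟨M, hM, hle⟩ := (eq_top_or_exists_le_coatom (Subgroup.closure S)).resolve_left h
  haveI := hmax M hM
  have hSM : S ⊆ (M : Set G) := fun x hx => hle (Subgroup.subset_closure hx)
  have : Subgroup.normalClosure S ≤ M := Subgroup.normalClosure_le_normal hSM
  rw [hS] at this
  exact hM.1 (top_le_iff.1 this)
end

section
/- Let G be a finitely generated group in which every maximal subgroup is normal, let π: G → G/[G,G] be the natural projection, and let s₁,...,sₙ ∈ G be elements such that π(s₁),...,π(sₙ) generate G/[G,G]. Then s₁,...,sₙ generate G. -/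
open CompleteLattice in
lemma top_isCompactElement_of_fg {G : Type*} [Group G] (hfg : Group.FG G) :
    IsCompactElement (⊤ : Subgroup G) := by
  obtain ⟨T, hT⟩ := hfg.1
  rw [isCompactElement_iff_le_of_directed_sSup_le]
  classical
  intro d hne hdir hle
  -- every element of T lies in some member of d; use directedness to find one containing all
  have key : ∀ S : Finset G, ∃ K ∈ d, (S : Set G) ⊆ K := by
    intro S
    induction S using Finset.induction_on with
    | empty => obtain ⟨K, hK⟩ := hne; exact ⟨K, hK, by simp⟩
    | @insert a S ha ih =>
      obtain ⟨K, hKd, hSK⟩ := ih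
      have haK : a ∈ sSup d := hle (Subgroup.mem_top a)
      rw [Subgroup.mem_sSup_of_directedOn hne hdir] at haK
      obtain ⟨L, hLd, haL⟩ := haK
      obtain ⟨N, hNd, hKN, hLN⟩ := hdir K hKd L hLd
      refine ⟨N, hNd, ?_⟩
      intro x hx
      rcases Finset.mem_insert.mp hx with rfl | hxS
      · exact hLN haL
      · exact hKN (hSK hxS)
  obtain ⟨K, hKd, hTK⟩ := key T
  refine ⟨K, hKd, ?_⟩
  rw [← hT]
  exact Subgroup.closure_le K |>.mpr hTK

lemma commutator_le_coatom {G : Type*} [Group G] {M : Subgroup G}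
    (hM : IsCoatom M) (hnorm : M.Normal) : commutator G ≤ M := by
  -- the quotient G ⧸ M is cyclic, hence commutative
  have hcyc : ∀ q : G ⧸ M, q ∈ Subgroup.center (G ⧸ M) := by
    by_cases htriv : ∀ q : G ⧸ M, q = 1
    · intro q; rw [htriv q]; exact Subgroup.one_mem _
    · push_neg at htriv
      obtain ⟨q, hq⟩ := htriv
      obtain ⟨x, rfl⟩ := QuotientGroup.mk_surjective q
      have hxM : x ∉ M := fun hxM => hq ((QuotientGroup.eq_one_iff x).mpr hxM)
      have hzp : Subgroup.zpowers ((x : G ⧸ M)) = ⊤ := by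
        have h1 : M ⊔ Subgroup.zpowers x = ⊤ :=
          hM.2 _ (lt_of_le_of_ne le_sup_left fun h => hxM (by
            rw [h]; exact Subgroup.mem_sup_right (Subgroup.mem_zpowers x)))
        have : Subgroup.map (QuotientGroup.mk' M) (M ⊔ Subgroup.zpowers x) = ⊤ := by
          rw [h1, ← MonoidHom.range_eq_map, MonoidHom.range_eq_top_of_surjective _
            (QuotientGroup.mk'_surjective M)]
        rw [Subgroup.map_sup, (Subgroup.map_eq_bot_iff _).mpr
          (by rw [QuotientGroup.ker_mk']), bot_sup_eq] at this
        rw [← this]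
        ext y
        simp only [Subgroup.mem_zpowers_iff, Subgroup.mem_map]
        constructor
        · rintro ⟨k, rfl⟩
          exact ⟨x ^ k, ⟨k, rfl⟩, by simp⟩
        · rintro ⟨g, ⟨k, rfl⟩, rfl⟩
          exact ⟨k, by simp⟩
      intro p
      rw [Subgroup.mem_center_iff]
      intro r
      have hp := hzp ▸ Subgroup.mem_top p
      have hr := hzp ▸ Subgroup.mem_top r
      obtain ⟨a, rfl⟩ := Subgroup.mem_zpowers_iff.mp hp
      obtain ⟨b, rfl⟩ := Subgroup.mem_zpowers_iff.mp hr
      rw [← zpow_add, ← zpow_add, add_comm]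
  -- hence all commutators lie in M
  rw [commutator_def, Subgroup.commutator_le]
  intro g _ h _
  rw [← QuotientGroup.eq_one_iff]
  have := Subgroup.mem_center_iff.mp (hcyc ((g : G) : G ⧸ M)) ((h : G) : G ⧸ M)
  show ((↑g * ↑h * (↑g)⁻¹ * (↑h)⁻¹ : G) : G ⧸ M) = 1
  simp only [QuotientGroup.mk_mul, QuotientGroup.mk_inv]
  rw [← this]
  group

/-- In a finitely generated group where every maximal subgroup is normal, elements
whose images generate the abelianization generate the whole group. -/
theorem stmt_4 {G : Type*} [Group G] (hfg : Group.FG G)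
    (hmax : ∀ M : Subgroup G, IsCoatom M → M.Normal)
    (n : ℕ) (s : Fin n → G)
    (hgen : Subgroup.closure (Set.range fun i => Abelianization.of (s i)) = ⊤) :
    Subgroup.closure (Set.range s) = ⊤ := by
  by_contra h
  have : IsCoatomic (Subgroup G) :=
    CompleteLattice.coatomic_of_top_compact (top_isCompactElement_of_fg hfg)
  obtain ⟨M, hM, hle⟩ :=
    (eq_top_or_exists_le_coatom (Subgroup.closure (Set.range s))).resolve_left h
  have hnorm := hmax M hM
  have hcomm : commutator G ≤ M := commutator_le_coatom hM hnorm
  have hker : (Abelianization.of : G →* Abelianization G).ker ≤ M := by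
    intro x hx
    rw [MonoidHom.mem_ker] at hx
    exact hcomm ((QuotientGroup.eq_one_iff x).mp hx)
  have hmap : Subgroup.map Abelianization.of (Subgroup.closure (Set.range s)) = ⊤ := by
    rw [MonoidHom.map_closure, ← hgen]
    congr 1
    ext y
    simp [Set.range_comp]
  have hsup : Subgroup.closure (Set.range s) ⊔ (Abelianization.of : G →* Abelianization G).ker
      = ⊤ := by
    rw [← Subgroup.comap_map_eq, hmap, Subgroup.comap_top]
  exact hM.1 (top_le_iff.mp (hsup ▸ sup_le hle hker))
end
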